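/- Dunwoody's tree construction (natural map from V). Let V be a set and let 𝓔 be a nonempty collection of subsets of V such that: ∅ ∉ 𝓔; 𝓔 is complement-stable; 𝓔 is nested; and 𝓔 is finitely separating. For e ∈ 𝓔 set ι(e) = {d ∈ 𝓔 : e ⊆ d or eᶜ ⊊ d}. Then for every v ∈ V: (1) the set v** ∩ 𝓔 := {d ∈ 𝓔 : v ∈ d} has a ⊆-minimal element; and (2) for every ⊆-minimal element e of v** ∩ 𝓔 one has v** ∩ 𝓔 = ι(e). -/

import Mathlib

/-- `ι(e) = {d ∈ 𝓔 : e ⊆ d or eᶜ ⊊ d}`. -/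
def dunwoodyIota {V : Type*} (𝓔 : Set (Set V)) (e : Set V) : Set (Set V) :=
  {d ∈ 𝓔 | e ⊆ d ∨ eᶜ ⊂ d}

/-- **Dunwoody's tree construction (natural map from `V`).** For every `v ∈ V`,
the set `v** ∩ 𝓔 = {d ∈ 𝓔 : v ∈ d}` has a `⊆`-minimal element, and for every
`⊆`-minimal element `e` of it, one has `v** ∩ 𝓔 = ι(e)`. -/
theorem dunwoody_natural_map {V : Type*} (𝓔 : Set (Set V))
    (hne : 𝓔.Nonempty) (hempty : ∅ ∉ 𝓔)
    (hcompl : ∀ e ∈ 𝓔, eᶜ ∈ 𝓔)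
    (hnested : ∀ e ∈ 𝓔, ∀ f ∈ 𝓔,
      e ∩ f = ∅ ∨ e ∩ fᶜ = ∅ ∨ eᶜ ∩ f = ∅ ∨ eᶜ ∩ fᶜ = ∅)
    (hsep : ∀ v w : V, (symmDiff {d ∈ 𝓔 | v ∈ d} {d ∈ 𝓔 | w ∈ d}).Finite) :
    ∀ v : V,
      (∃ e ∈ 𝓔, v ∈ e ∧ ∀ d ∈ 𝓔, v ∈ d → d ⊆ e → d = e) ∧
      (∀ e ∈ 𝓔, v ∈ e → (∀ d ∈ 𝓔, v ∈ d → d ⊆ e → d = e) →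
        {d ∈ 𝓔 | v ∈ d} = dunwoodyIota 𝓔 e) := by
  intro v
  constructor
  · -- existence of a minimal element
    obtain ⟨a, ha⟩ := hne
    obtain ⟨e₀, he₀, hve₀⟩ : ∃ e₀ ∈ 𝓔, v ∈ e₀ := by
      by_cases h : v ∈ a
      · exact ⟨a, ha, h⟩
      · exact ⟨aᶜ, hcompl a ha, h⟩
    -- pick w outside e₀
    have hce₀ : e₀ᶜ ∈ 𝓔 := hcompl e₀ he₀
    have hcne : e₀ᶜ ≠ ∅ := fun h => hempty (h ▸ hce₀)
    obtain ⟨w, hw⟩ := Set.nonempty_iff_ne_empty.2 hcne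
    have hwne : w ∉ e₀ := hw
    -- the candidate set
    set S : Set (Set V) := {d ∈ 𝓔 | v ∈ d ∧ d ⊆ e₀} with hS
    have hSsub : S ⊆ symmDiff {d ∈ 𝓔 | v ∈ d} {d ∈ 𝓔 | w ∈ d} := by
      intro d hd
      rw [Set.mem_symmDiff]
      left
      exact ⟨⟨hd.1, hd.2.1⟩, fun h => hwne (hd.2.2 h.2)⟩
    have hSfin : S.Finite := (hsep v w).subset hSsub
    have hSne : S.Nonempty := ⟨e₀, he₀, hve₀, subset_rfl⟩
    obtain ⟨e, heS, hemin⟩ : ∃ e ∈ S, ∀ a' ∈ S, id a' ≤ id e → id e = id a' := by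
      obtain ⟨e, he1, he2⟩ := hSfin.exists_minimalFor id S hSne
      exact ⟨e, he1, fun a ha hle => le_antisymm (he2 ha hle) hle⟩
    refine ⟨e, heS.1, heS.2.1, fun d hd hvd hde => ?_⟩
    have hdS : d ∈ S := ⟨hd, hvd, hde.trans heS.2.2⟩
    have : ¬ (id d ⊂ id e) := fun hlt => hlt.2 (hemin d hdS hlt.1 ▸ subset_rfl)
    by_contra hne'
    exact this ⟨hde, fun hed => hne' (subset_antisymm hde hed)⟩
  · -- characterization via ι
    intro e he hve hmin
    ext d
    simp only [dunwoodyIota, Set.mem_setOf_eq]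
    constructor
    · rintro ⟨hd, hvd⟩
      refine ⟨hd, ?_⟩
      rcases hnested e he d hd with h | h | h | h
      · exact (Set.eq_empty_iff_forall_notMem.1 h v ⟨hve, hvd⟩).elim
      · left
        intro x hx
        by_contra hxd
        exact Set.eq_empty_iff_forall_notMem.1 h x ⟨hx, hxd⟩
      · -- d ⊆ e, hence d = e
        left
        have hsub : d ⊆ e := by
          intro x hx
          by_contra hxe
          exact Set.eq_empty_iff_forall_notMem.1 h x ⟨hxe, hx⟩
        rw [hmin d hd hvd hsub]
      · -- eᶜ ⊆ d
        have hsub : eᶜ ⊆ d := by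
          intro x hx
          by_contra hxd
          exact Set.eq_empty_iff_forall_notMem.1 h x ⟨hx, hxd⟩
        right
        refine ⟨hsub, fun hds : d ⊆ eᶜ => ?_⟩
        exact hds hvd hve
    · rintro ⟨hd, h | h⟩
      · exact ⟨hd, h hve⟩
      · refine ⟨hd, ?_⟩
        by_contra hvd
        have hdc : dᶜ ∈ 𝓔 := hcompl d hd
        have hsub : dᶜ ⊆ e := fun x hx => by
          by_contra hxe
          exact hx (h.1 hxe)
        have heq := hmin dᶜ hdc hvd hsub
        exact h.2 (by rw [← heq]; exact Set.subset_compl_comm.mp subset_rfl)
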